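/- Fix w* ≠ 0, τ₁*², τ₂*² > 0 and y ≠ 0. Define D₂₁(η) = (1/2) log(1 − η² w*² τ₁*² / (η(w*² τ₁*² + τ₂*²) + (1−η) y²)) + (η/2) log(1 + w*² τ₁*² / τ₂*²) for η ∈ (0,1). Then the argument of the first logarithm lies in (0,1) for all η ∈ (0,1), D₂₁(η) > 0 on (0,1), D₂₁ is strictly concave on (0,1), lim_{η→0⁺} D₂₁(η) = 0 and lim_{η→1⁻} D₂₁(η) = 0; hence D₂₁ attains a maximum at some interior point η* ∈ (0,1). -/

import Mathlib

open Filter Set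

/-- The concentration exponent `D₂₁(η)` for the true model `X(1) → X(2)`
with a fraction `η` of observational samples. -/
noncomputable def D21 (w τ1 τ2 y : ℝ) (η : ℝ) : ℝ :=
  (1 / 2) * Real.log
      (1 - η ^ 2 * w ^ 2 * τ1 / (η * (w ^ 2 * τ1 + τ2) + (1 - η) * y ^ 2))
    + η / 2 * Real.log (1 + w ^ 2 * τ1 / τ2)

noncomputable section AuxD21

/-- numerator quadratic -/
def QaD21 (a b c η : ℝ) : ℝ := c + η * (b - c) - a * η ^ 2

/-- denominator linear -/
def DaD21 (b c η : ℝ) : ℝ := c + η * (b - c)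

/-- rewritten exponent -/
def FaD21 (a b c L η : ℝ) : ℝ :=
  1 / 2 * (Real.log (QaD21 a b c η) - Real.log (DaD21 b c η)) + η / 2 * L

/-- first derivative -/
def GaD21 (a b c L η : ℝ) : ℝ :=
  1 / 2 * ((b - c - 2 * a * η) / QaD21 a b c η - (b - c) / DaD21 b c η) + L / 2

/-- second derivative -/
def HaD21 (a b c η : ℝ) : ℝ :=
  1 / 2 * ((-(2 * a) * QaD21 a b c η - (b - c - 2 * a * η) ^ 2) / (QaD21 a b c η) ^ 2
    + (b - c) ^ 2 / (DaD21 b c η) ^ 2)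

lemma hasDerivAt_DaD21 (b c η : ℝ) : HasDerivAt (DaD21 b c) (b - c) η := by
  unfold DaD21
  simpa using ((hasDerivAt_id η).mul_const (b - c)).const_add c

lemma hasDerivAt_QaD21 (a b c η : ℝ) :
    HasDerivAt (QaD21 a b c) (b - c - 2 * a * η) η := by
  unfold QaD21
  have h1 : HasDerivAt (fun x : ℝ => c + x * (b - c)) (b - c) η := by
    simpa using ((hasDerivAt_id η).mul_const (b - c)).const_add c
  have h2 : HasDerivAt (fun x : ℝ => a * x ^ 2) (a * (2 * η)) η := by
    simpa using (hasDerivAt_pow 2 η).const_mul a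
  refine (h1.sub h2).congr_deriv ?_
  ring

lemma DaD21_pos {b c : ℝ} (hb : 0 < b) (hc : 0 < c) {η : ℝ}
    (h0 : 0 ≤ η) (h1 : η ≤ 1) : 0 < DaD21 b c η := by
  unfold DaD21
  rcases eq_or_lt_of_le h0 with h | h
  · rw [← h]; simpa using hc
  · nlinarith [mul_pos h hb, mul_nonneg (sub_nonneg.2 h1) hc.le]

lemma QaD21_pos {a b c : ℝ} (ha : 0 < a) (hab : a < b) (hc : 0 < c) {η : ℝ}
    (h0 : 0 ≤ η) (h1 : η ≤ 1) : 0 < QaD21 a b c η := by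
  unfold QaD21
  rcases eq_or_lt_of_le h0 with h | h
  · rw [← h]; simpa using hc
  · have hb' : 0 < b - a * η := by nlinarith
    nlinarith [mul_pos h hb', mul_nonneg (sub_nonneg.2 h1) hc.le]

lemma hasDerivAt_FaD21 (a b c L η : ℝ) (hq : QaD21 a b c η ≠ 0)
    (hd : DaD21 b c η ≠ 0) :
    HasDerivAt (FaD21 a b c L) (GaD21 a b c L η) η := by
  have hQ := (hasDerivAt_QaD21 a b c η).log hq
  have hD := (hasDerivAt_DaD21 b c η).log hd
  have hlin : HasDerivAt (fun x : ℝ => x / 2 * L) (L / 2) η := by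
    have h := ((hasDerivAt_id η).div_const (2 : ℝ)).mul_const L
    refine h.congr_deriv ?_
    ring
  have h := ((hQ.sub hD).const_mul (1 / 2 : ℝ)).add hlin
  exact h

lemma hasDerivAt_GaD21 (a b c L η : ℝ) (hq : QaD21 a b c η ≠ 0)
    (hd : DaD21 b c η ≠ 0) :
    HasDerivAt (GaD21 a b c L) (HaD21 a b c η) η := by
  have hu : HasDerivAt (fun x : ℝ => b - c - 2 * a * x) (-(2 * a)) η := by
    simpa using ((hasDerivAt_id η).const_mul (2 * a)).const_sub (b - c)
  have h1 := hu.div (hasDerivAt_QaD21 a b c η) hq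
  have h2 := (hasDerivAt_const η (b - c : ℝ)).div (hasDerivAt_DaD21 b c η) hd
  have h := ((h1.sub h2).const_mul (1 / 2 : ℝ)).add_const (L / 2)
  refine h.congr_deriv ?_
  unfold HaD21
  ring

lemma HaD21_neg {a b c η : ℝ} (ha : 0 < a) (hc : 0 < c)
    (hq : 0 < QaD21 a b c η) (hd : 0 < DaD21 b c η) : HaD21 a b c η < 0 := by
  unfold HaD21
  set Q := QaD21 a b c η with hQ
  set D := DaD21 b c η with hD
  set s := b - c with hs
  have hQdef : Q = D - a * η ^ 2 := by rw [hQ, hD]; unfold QaD21 DaD21; ring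
  have hDdef : D - η * s = c := by rw [hD, hs]; unfold DaD21; ring
  have haη : a * η ^ 2 < D := by rw [hQdef] at hq; linarith
  have hpos : 0 < (2 * a * Q + (s - 2 * a * η) ^ 2) * D ^ 2 - s ^ 2 * Q ^ 2 := by
    have hid : (2 * a * Q + (s - 2 * a * η) ^ 2) * D ^ 2 - s ^ 2 * Q ^ 2
        = a * (2 * D * c ^ 2 + a * η ^ 2 * (D ^ 2 + 2 * D * c - c ^ 2)) := by
      rw [hQdef, ← hDdef]; ring
    rw [hid]
    have h1' : 0 < (D - a * η ^ 2) * (c * c) := mul_pos (by linarith) (mul_pos hc hc)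
    have h2 : 0 < D * (c * c) := mul_pos hd (mul_pos hc hc)
    have h3 : 0 ≤ a * η ^ 2 * (D * D) :=
      mul_nonneg (mul_nonneg ha.le (sq_nonneg η)) (mul_pos hd hd).le
    have h4 : 0 ≤ a * η ^ 2 * (D * c) :=
      mul_nonneg (mul_nonneg ha.le (sq_nonneg η)) (mul_pos hd hc).le
    have := mul_pos ha (show 0 < 2 * D * c ^ 2 + a * η ^ 2 * (D ^ 2 + 2 * D * c - c ^ 2) by
      nlinarith [h1', h2, h3, h4])
    exact this
  have hQ2 : 0 < Q ^ 2 := pow_pos hq 2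
  have hD2 : 0 < D ^ 2 := pow_pos hd 2
  have hrw : (-(2 * a) * Q - (s - 2 * a * η) ^ 2) / Q ^ 2 + s ^ 2 / D ^ 2
      = ((-(2 * a) * Q - (s - 2 * a * η) ^ 2) * D ^ 2 + s ^ 2 * Q ^ 2) / (Q ^ 2 * D ^ 2) := by
    field_simp
  rw [hrw]
  have hkey : (-(2 * a) * Q - (s - 2 * a * η) ^ 2) * D ^ 2 + s ^ 2 * Q ^ 2 < 0 := by
    nlinarith [hpos]
  have := div_neg_of_neg_of_pos hkey (mul_pos hQ2 hD2)
  linarith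

lemma strictConcaveOn_FaD21 {a b c : ℝ} (L : ℝ) (ha : 0 < a) (hab : a < b) (hc : 0 < c) :
    StrictConcaveOn ℝ (Icc (0 : ℝ) 1) (FaD21 a b c L) := by
  apply strictConcaveOn_of_deriv2_neg (convex_Icc 0 1)
  · intro x hx
    exact (hasDerivAt_FaD21 a b c L x (QaD21_pos ha hab hc hx.1 hx.2).ne'
      (DaD21_pos (ha.trans hab) hc hx.1 hx.2).ne').continuousAt.continuousWithinAt
  · intro x hx
    rw [interior_Icc] at hx
    have hev : deriv (FaD21 a b c L) =ᶠ[nhds x] GaD21 a b c L := by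
      filter_upwards [isOpen_Ioo.mem_nhds hx] with y hy
      exact (hasDerivAt_FaD21 a b c L y (QaD21_pos ha hab hc hy.1.le hy.2.le).ne'
        (DaD21_pos (ha.trans hab) hc hy.1.le hy.2.le).ne').deriv
    have h2 : deriv^[2] (FaD21 a b c L) x = deriv (deriv (FaD21 a b c L)) x := rfl
    rw [h2, hev.deriv_eq,
      (hasDerivAt_GaD21 a b c L x (QaD21_pos ha hab hc hx.1.le hx.2.le).ne'
        (DaD21_pos (ha.trans hab) hc hx.1.le hx.2.le).ne').deriv]
    exact HaD21_neg ha hc (QaD21_pos ha hab hc hx.1.le hx.2.le)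
      (DaD21_pos (ha.trans hab) hc hx.1.le hx.2.le)

end AuxD21

theorem stmt_14 (w τ1 τ2 y : ℝ) (hw : w ≠ 0) (h1 : 0 < τ1) (h2 : 0 < τ2)
    (hy : y ≠ 0) :
    (∀ η ∈ Set.Ioo (0 : ℝ) 1,
        1 - η ^ 2 * w ^ 2 * τ1 / (η * (w ^ 2 * τ1 + τ2) + (1 - η) * y ^ 2)
          ∈ Set.Ioo (0 : ℝ) 1) ∧
      (∀ η ∈ Set.Ioo (0 : ℝ) 1, 0 < D21 w τ1 τ2 y η) ∧
      StrictConcaveOn ℝ (Set.Ioo (0 : ℝ) 1) (D21 w τ1 τ2 y) ∧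
      Tendsto (D21 w τ1 τ2 y) (nhdsWithin 0 (Set.Ioi 0)) (nhds 0) ∧
      Tendsto (D21 w τ1 τ2 y) (nhdsWithin 1 (Set.Iio 1)) (nhds 0) ∧
      ∃ η ∈ Set.Ioo (0 : ℝ) 1,
        ∀ x ∈ Set.Ioo (0 : ℝ) 1, D21 w τ1 τ2 y x ≤ D21 w τ1 τ2 y η := by
  have hw2 : (0 : ℝ) < w ^ 2 := by positivity
  have ha : 0 < w ^ 2 * τ1 := by positivity
  have hb : 0 < w ^ 2 * τ1 + τ2 := by positivity
  have hc : 0 < y ^ 2 := by positivity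
  have hab : w ^ 2 * τ1 < w ^ 2 * τ1 + τ2 := by linarith
  set L := Real.log (1 + w ^ 2 * τ1 / τ2) with hL
  have hdeq : ∀ η : ℝ, η * (w ^ 2 * τ1 + τ2) + (1 - η) * y ^ 2
      = DaD21 (w ^ 2 * τ1 + τ2) (y ^ 2) η := by
    intro η; unfold DaD21; ring
  have hFeq : ∀ η ∈ Icc (0 : ℝ) 1,
      D21 w τ1 τ2 y η = FaD21 (w ^ 2 * τ1) (w ^ 2 * τ1 + τ2) (y ^ 2) L η := by
    intro η hη
    have hd := DaD21_pos hb hc hη.1 hη.2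
    have hq := QaD21_pos ha hab hc hη.1 hη.2
    have hd' : η * (w ^ 2 * τ1 + τ2) + (1 - η) * y ^ 2 ≠ 0 := by
      rw [hdeq]; exact hd.ne'
    have hd2 : y ^ 2 + η * (w ^ 2 * τ1 + τ2 - y ^ 2) ≠ 0 := by
      have h := hd; unfold DaD21 at h; exact h.ne'
    unfold D21 FaD21
    rw [show 1 - η ^ 2 * w ^ 2 * τ1 / (η * (w ^ 2 * τ1 + τ2) + (1 - η) * y ^ 2)
        = QaD21 (w ^ 2 * τ1) (w ^ 2 * τ1 + τ2) (y ^ 2) η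
          / DaD21 (w ^ 2 * τ1 + τ2) (y ^ 2) η from by
      unfold QaD21 DaD21; field_simp; ring]
    rw [Real.log_div hq.ne' hd.ne']
  have hconc := strictConcaveOn_FaD21 L ha hab hc
  have hF0 : FaD21 (w ^ 2 * τ1) (w ^ 2 * τ1 + τ2) (y ^ 2) L 0 = 0 := by
    unfold FaD21 QaD21 DaD21; norm_num
  have hL' : L = Real.log (w ^ 2 * τ1 + τ2) - Real.log τ2 := by
    rw [hL, show 1 + w ^ 2 * τ1 / τ2 = (w ^ 2 * τ1 + τ2) / τ2 from by
      field_simp; ring, Real.log_div hb.ne' h2.ne']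
  have hF1 : FaD21 (w ^ 2 * τ1) (w ^ 2 * τ1 + τ2) (y ^ 2) L 1 = 0 := by
    unfold FaD21 QaD21 DaD21
    rw [hL']
    rw [show y ^ 2 + 1 * (w ^ 2 * τ1 + τ2 - y ^ 2) - w ^ 2 * τ1 * 1 ^ 2 = τ2 from by ring]
    rw [show y ^ 2 + 1 * (w ^ 2 * τ1 + τ2 - y ^ 2) = w ^ 2 * τ1 + τ2 from by ring]
    ring
  have hpos : ∀ η ∈ Ioo (0 : ℝ) 1,
      0 < FaD21 (w ^ 2 * τ1) (w ^ 2 * τ1 + τ2) (y ^ 2) L η := by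
    intro η hη
    have h := hconc.2 (left_mem_Icc.2 zero_le_one) (right_mem_Icc.2 zero_le_one)
      (by norm_num) (show (0 : ℝ) < 1 - η by linarith [hη.2]) hη.1
      (by ring : (1 - η) + η = 1)
    simp only [smul_eq_mul] at h
    rw [hF0, hF1, show (1 - η) * 0 + η * 1 = η from by ring] at h
    linarith
  have hcontF : ContinuousOn (FaD21 (w ^ 2 * τ1) (w ^ 2 * τ1 + τ2) (y ^ 2) L)
      (Icc (0 : ℝ) 1) := fun z hz =>
    (hasDerivAt_FaD21 _ _ _ L z (QaD21_pos ha hab hc hz.1 hz.2).ne'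
      (DaD21_pos hb hc hz.1 hz.2).ne').continuousAt.continuousWithinAt
  refine ⟨?_, ?_, ?_, ?_, ?_, ?_⟩
  · -- membership in Ioo
    intro η hη
    have hd : 0 < η * (w ^ 2 * τ1 + τ2) + (1 - η) * y ^ 2 := by
      rw [hdeq]; exact DaD21_pos hb hc hη.1.le hη.2.le
    have hq := QaD21_pos ha hab hc hη.1.le hη.2.le
    have hqlt : η ^ 2 * w ^ 2 * τ1 < η * (w ^ 2 * τ1 + τ2) + (1 - η) * y ^ 2 := by
      unfold QaD21 at hq; nlinarith [hq]
    constructor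
    · have := (div_lt_one hd).2 hqlt
      linarith
    · have hnum : 0 < η ^ 2 * w ^ 2 * τ1 := by
        have := hη.1; positivity
      have := div_pos hnum hd
      linarith
  · -- positivity of D21
    intro η hη
    rw [hFeq η (Ioo_subset_Icc_self hη)]
    exact hpos η hη
  · -- strict concavity
    refine ⟨convex_Ioo 0 1, ?_⟩
    intro u hu v hv huv p q hp hq hpq
    have hmem : p • u + q • v ∈ Ioo (0 : ℝ) 1 := (convex_Ioo 0 1) hu hv hp.le hq.le hpq
    rw [hFeq u (Ioo_subset_Icc_self hu), hFeq v (Ioo_subset_Icc_self hv),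
      hFeq _ (Ioo_subset_Icc_self hmem)]
    exact hconc.2 (Ioo_subset_Icc_self hu) (Ioo_subset_Icc_self hv) huv hp hq hpq
  · -- tendsto at 0
    have hq0 := QaD21_pos ha hab hc (le_refl (0 : ℝ)) zero_le_one
    have hd0 := DaD21_pos hb hc (le_refl (0 : ℝ)) zero_le_one
    have hcont0 := (hasDerivAt_FaD21 _ _ _ L 0 hq0.ne' hd0.ne').continuousAt
    have ht0 : Tendsto (FaD21 (w ^ 2 * τ1) (w ^ 2 * τ1 + τ2) (y ^ 2) L)
        (nhdsWithin 0 (Set.Ioi 0)) (nhds 0) := by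
      have h : Tendsto (FaD21 (w ^ 2 * τ1) (w ^ 2 * τ1 + τ2) (y ^ 2) L)
          (nhdsWithin 0 (Set.Ioi 0))
          (nhds (FaD21 (w ^ 2 * τ1) (w ^ 2 * τ1 + τ2) (y ^ 2) L 0)) :=
        hcont0.continuousWithinAt (s := Set.Ioi (0 : ℝ))
      rw [hF0] at h
      exact h
    have hev : FaD21 (w ^ 2 * τ1) (w ^ 2 * τ1 + τ2) (y ^ 2) L
        =ᶠ[nhdsWithin 0 (Set.Ioi 0)] D21 w τ1 τ2 y := by
      filter_upwards [Ioo_mem_nhdsGT_of_mem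
        (show (0 : ℝ) ∈ Ico (0 : ℝ) 1 by norm_num)] with z hz
      exact (hFeq z (Ioo_subset_Icc_self hz)).symm
    exact ht0.congr' hev
  · -- tendsto at 1
    have hq1 := QaD21_pos ha hab hc zero_le_one (le_refl (1 : ℝ))
    have hd1 := DaD21_pos hb hc zero_le_one (le_refl (1 : ℝ))
    have hcont1 := (hasDerivAt_FaD21 _ _ _ L 1 hq1.ne' hd1.ne').continuousAt
    have ht1 : Tendsto (FaD21 (w ^ 2 * τ1) (w ^ 2 * τ1 + τ2) (y ^ 2) L)
        (nhdsWithin 1 (Set.Iio 1)) (nhds 0) := by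
      have h : Tendsto (FaD21 (w ^ 2 * τ1) (w ^ 2 * τ1 + τ2) (y ^ 2) L)
          (nhdsWithin 1 (Set.Iio 1))
          (nhds (FaD21 (w ^ 2 * τ1) (w ^ 2 * τ1 + τ2) (y ^ 2) L 1)) :=
        hcont1.continuousWithinAt (s := Set.Iio (1 : ℝ))
      rw [hF1] at h
      exact h
    have hev : FaD21 (w ^ 2 * τ1) (w ^ 2 * τ1 + τ2) (y ^ 2) L
        =ᶠ[nhdsWithin 1 (Set.Iio 1)] D21 w τ1 τ2 y := by
      filter_upwards [Ioo_mem_nhdsLT_of_mem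
        (show (1 : ℝ) ∈ Ioc (0 : ℝ) 1 by norm_num)] with z hz
      exact (hFeq z (Ioo_subset_Icc_self hz)).symm
    exact ht1.congr' hev
  · -- max
    obtain ⟨x0, hx0, hmax⟩ := isCompact_Icc.exists_isMaxOn
      (nonempty_Icc.2 zero_le_one) hcontF
    have hhalf : (1 / 2 : ℝ) ∈ Ioo (0 : ℝ) 1 := by norm_num
    have hx0pos : 0 < FaD21 (w ^ 2 * τ1) (w ^ 2 * τ1 + τ2) (y ^ 2) L x0 :=
      lt_of_lt_of_le (hpos _ hhalf) (hmax (Ioo_subset_Icc_self hhalf))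
    have hne0 : x0 ≠ 0 := by
      intro h; rw [h, hF0] at hx0pos; exact lt_irrefl 0 hx0pos
    have hne1 : x0 ≠ 1 := by
      intro h; rw [h, hF1] at hx0pos; exact lt_irrefl 0 hx0pos
    have hx0Ioo : x0 ∈ Ioo (0 : ℝ) 1 :=
      ⟨hx0.1.lt_of_ne (Ne.symm hne0), hx0.2.lt_of_ne hne1⟩
    exact ⟨x0, hx0Ioo, fun z hz => by
      rw [hFeq z (Ioo_subset_Icc_self hz), hFeq x0 (Ioo_subset_Icc_self hx0Ioo)]
      exact hmax (Ioo_subset_Icc_self hz)⟩
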